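/- Let q be a prime number and l an integer with l > q and k := l mod q ≠ 0, and let B = B(q,l). Then the characteristic polynomial of the real q²×q² matrix B Bᵀ equals (X − ql)·(X − (l+q−k))^{(q−1)k}·(X − (l−k))^{(q−1)(q−k)}·X^{q−1}. Equivalently, B has a simple singular value √(ql), (q−1)k singular values equal to √(l+q−k), (q−1)(q−k) singular values equal to √(l−k), and q−1 singular values equal to 0. -/

import Mathlib

open Matrix Polynomial

def cyclicShift (q : ℕ) : Matrix (Fin q) (Fin q) ℝ :=
  Matrix.of fun i j => if (j : ZMod q) = (i : ZMod q) - 1 then 1 else 0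

def arrayB (q l : ℕ) : Matrix (Fin q × Fin q) (Fin l × Fin q) ℝ :=
  Matrix.of fun r c => (cyclicShift q ^ ((r.1 : ℕ) * (c.1 : ℕ))) r.2 c.2

namespace ArrayBAux

variable {q : ℕ}

/-- The equivalence between `Fin q` and `ZMod q`. -/
def fz (q : ℕ) [NeZero q] : Fin q ≃ ZMod q where
  toFun i := ((i : ℕ) : ZMod q)
  invFun z := ⟨z.val, z.val_lt⟩
  left_inv i := Fin.ext (ZMod.val_cast_of_lt i.isLt)
  right_inv z := ZMod.natCast_rightInverse z

lemma fz_apply [NeZero q] (i : Fin q) : fz q i = ((i : ℕ) : ZMod q) := rfl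

lemma fz_inj [NeZero q] {a b : Fin q} :
    ((a : ℕ) : ZMod q) = ((b : ℕ) : ZMod q) ↔ a = b := (fz q).injective.eq_iff

lemma cyclicShift_pow_apply [NeZero q] (n : ℕ) (a b : Fin q) :
    (cyclicShift q ^ n) a b = if ((b : ℕ) : ZMod q) = ((a : ℕ) : ZMod q) - n then 1 else 0 := by
  induction n generalizing a b with
  | zero =>
    simp only [pow_zero, Matrix.one_apply, Nat.cast_zero, sub_zero]
    simp only [fz_inj, eq_comm]
  | succ n ih =>
    rw [pow_succ, Matrix.mul_apply]
    have key : ∀ c : Fin q, (cyclicShift q ^ n) a c * cyclicShift q c b =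
        if c = (fz q).symm (((a : ℕ) : ZMod q) - n) then
          (if ((b : ℕ) : ZMod q) = ((a : ℕ) : ZMod q) - (n + 1 : ℕ) then 1 else 0) else 0 := by
      intro c
      rw [ih]
      show _ * (if ((b : ℕ) : ZMod q) = ((c : ℕ) : ZMod q) - 1 then 1 else 0) = _
      by_cases hc : ((c : ℕ) : ZMod q) = ((a : ℕ) : ZMod q) - n
      · have hc' : c = (fz q).symm (((a : ℕ) : ZMod q) - n) := by
          rw [← hc]; exact ((fz q).symm_apply_apply c).symm
        rw [if_pos hc, if_pos hc', hc]
        push_cast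
        ring_nf
      · have hc' : c ≠ (fz q).symm (((a : ℕ) : ZMod q) - n) := by
          intro h; apply hc
          rw [h]; exact (fz q).apply_symm_apply _
        rw [if_neg hc, if_neg hc', zero_mul]
    rw [Finset.sum_congr rfl (fun c _ => key c), Finset.sum_ite_eq' Finset.univ]
    simp

end ArrayBAux

namespace ArrayBAux2

lemma count_mod (q : ℕ) (hq : 1 < q) (r : ℕ) (hr : r < q) (l : ℕ) :
    ((Finset.range l).filter (fun n => n % q = r)).card
      = l / q + if r < l % q then 1 else 0 := by
  induction l with
  | zero => simp
  | succ l ih =>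
    rw [Finset.range_add_one, Finset.filter_insert]
    have hq0 : 0 < q := by omega
    have hsd : (l + 1) / q = l / q + if q ∣ l + 1 then 1 else 0 := Nat.succ_div (a := l) (b := q)
    have hmod : l % q < q := Nat.mod_lt _ hq0
    have hmod1 : (l + 1) % q < q := Nat.mod_lt _ hq0
    have h2 : (l + 1) % q = (l % q + 1) % q := by
      conv_lhs => rw [Nat.add_mod, Nat.mod_eq_of_lt hq]
    have hnotmem : l ∉ (Finset.range l).filter (fun n => n % q = r) := by
      simp
    by_cases hdvd : q ∣ l + 1
    · have h1 : (l + 1) % q = 0 := Nat.eq_zero_of_dvd_of_lt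
        ((Nat.dvd_mod_iff dvd_rfl).mpr hdvd) hmod1
      have h5 : l % q = q - 1 := by
        by_contra h
        have h6 : l % q + 1 < q := by omega
        rw [h2, Nat.mod_eq_of_lt h6] at h1
        omega
      rw [if_pos hdvd] at hsd
      by_cases hlr : l % q = r
      · rw [if_pos hlr, Finset.card_insert_of_notMem hnotmem, ih]
        rw [hsd, h1]
        split_ifs <;> omega
      · rw [if_neg hlr, ih, hsd, h1]
        split_ifs <;> omega
    · have h1 : (l + 1) % q ≠ 0 := fun h => hdvd (Nat.dvd_of_mod_eq_zero h)
      have h3 : l % q + 1 < q := by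
        rcases Nat.lt_or_ge (l % q + 1) q with h | h
        · exact h
        · have : l % q + 1 = q := by omega
          rw [h2, this, Nat.mod_self] at h1
          exact absurd rfl h1
      have h4 : (l + 1) % q = l % q + 1 := by rw [h2, Nat.mod_eq_of_lt h3]
      rw [if_neg hdvd] at hsd
      by_cases hlr : l % q = r
      · rw [if_pos hlr, Finset.card_insert_of_notMem hnotmem, ih]
        rw [hsd, h4]
        split_ifs <;> omega
      · rw [if_neg hlr, ih, hsd, h4]
        split_ifs <;> omega

end ArrayBAux2

namespace ArrayBAux3

open ArrayBAux ArrayBAux2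

variable {q : ℕ} [NeZero q] {ω : ℂ} (hω : IsPrimitiveRoot ω q)

/-- The additive character attached to a primitive root. -/
noncomputable def psi (hω : IsPrimitiveRoot ω q) : AddChar (ZMod q) ℂ :=
  AddChar.zmodChar q ((IsPrimitiveRoot.iff_def ω q).mp hω).left

lemma sum_psi (c : ZMod q) :
    ∑ x : ZMod q, psi hω (c * x) = if c = 0 then (q : ℂ) else 0 := by
  by_cases hc : c = 0
  · simp only [hc, zero_mul, if_pos rfl, AddChar.map_zero_eq_one]
    simp [Finset.card_univ, ZMod.card]
  · rw [if_neg hc]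
    have hprim := AddChar.zmodChar_primitive_of_primitive_root q hω
    have hne : (psi hω).mulShift c ≠ 1 := hprim hc
    have := AddChar.sum_eq_zero_of_ne_one hne
    simpa [AddChar.mulShift_apply] using this

lemma card_val_lt (k : ℕ) (hk : k ≤ q) :
    (Finset.univ.filter fun t : ZMod q => t.val < k).card = k := by
  have h : (Finset.univ.filter fun t : ZMod q => t.val < k).card = (Finset.range k).card := by
    refine Finset.card_nbij' (fun t => t.val) (fun n => (n : ZMod q)) ?_ ?_ ?_ ?_
    · intro t ht
      simpa using (Finset.mem_filter.mp ht).2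
    · intro n hn
      rw [Finset.mem_coe, Finset.mem_range] at hn
      simp [ZMod.val_cast_of_lt (lt_of_lt_of_le hn hk), hn]
    · intro t _; exact ZMod.natCast_rightInverse t
    · intro n hn
      rw [Finset.mem_coe, Finset.mem_range] at hn
      exact ZMod.val_cast_of_lt (lt_of_lt_of_le hn hk)
  rw [h, Finset.card_range]

lemma charpoly_diagonal {n : Type*} [DecidableEq n] [Fintype n] {R : Type*} [CommRing R]
    (d : n → R) : (Matrix.diagonal d).charpoly = ∏ i, (X - C (d i)) := by
  have : charmatrix (Matrix.diagonal d) = Matrix.diagonal (fun i => X - C (d i)) := by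
    ext i j
    by_cases h : i = j
    · subst h; simp
    · simp [charmatrix_apply_ne _ _ _ h, Matrix.diagonal_apply_ne _ h]
  rw [Matrix.charpoly, this, Matrix.det_diagonal]

end ArrayBAux3

namespace ArrayBAux4

open ArrayBAux ArrayBAux2 ArrayBAux3

variable {q : ℕ} [NeZero q] {ω : ℂ} (hω : IsPrimitiveRoot ω q)

/-- The eigenvalue function. -/
noncomputable def lam (q l : ℕ) [NeZero q] (p : ZMod q × ZMod q) : ℝ :=
  if p.1 = 0 then (if p.2 = 0 then ((q * l : ℕ) : ℝ) else 0)
  else ((q * (l / q + if ((-p.2) * p.1⁻¹).val < l % q then 1 else 0) : ℕ) : ℝ)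

/-- The (scaled) eigenvector matrix. -/
noncomputable def Umat (hω : IsPrimitiveRoot ω q) :
    Matrix (ZMod q × ZMod q) (ZMod q × ZMod q) ℂ :=
  Matrix.of fun p r => psi hω (r.1 * p.2 + r.2 * p.1)

/-- The inverse of `Umat`. -/
noncomputable def Vmat (hω : IsPrimitiveRoot ω q) :
    Matrix (ZMod q × ZMod q) (ZMod q × ZMod q) ℂ :=
  Matrix.of fun r p => psi hω (-(r.1 * p.2 + r.2 * p.1)) * ((q : ℂ) ^ 2)⁻¹

lemma Umat_mul_Vmat (hq : 1 < q) : Umat hω * Vmat hω = 1 := by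
  have hqC : (q : ℂ) ≠ 0 := Nat.cast_ne_zero.mpr (by omega)
  ext ⟨i, a⟩ ⟨i', a'⟩
  rw [Matrix.mul_apply, Fintype.sum_prod_type]
  have key : ∀ s u : ZMod q,
      Umat hω (i, a) (s, u) * Vmat hω (s, u) (i', a')
        = psi hω ((a - a') * s) * psi hω ((i - i') * u) * ((q : ℂ) ^ 2)⁻¹ := by
    intro s u
    show psi hω (s * a + u * i) * (psi hω (-(s * a' + u * i')) * _) = _
    rw [← mul_assoc, ← AddChar.map_add_eq_mul, ← AddChar.map_add_eq_mul,
      show s * a + u * i + -(s * a' + u * i') = (a - a') * s + (i - i') * u by ring]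
  simp only [key]
  have step1 : ∀ s : ZMod q, ∑ u : ZMod q,
      psi hω ((a - a') * s) * psi hω ((i - i') * u) * ((q : ℂ) ^ 2)⁻¹
        = psi hω ((a - a') * s) * (∑ u : ZMod q, psi hω ((i - i') * u)) * ((q : ℂ) ^ 2)⁻¹ := by
    intro s; rw [← Finset.sum_mul, ← Finset.mul_sum]
  simp only [step1, sum_psi hω]
  rw [← Finset.sum_mul, ← Finset.sum_mul, sum_psi hω]
  rw [Matrix.one_apply]
  by_cases h1 : a - a' = 0
  · by_cases h2 : i - i' = 0
    · rw [if_pos h1, if_pos h2, if_pos (by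
        rw [sub_eq_zero] at h1 h2; simp [Prod.ext_iff, h1, h2])]
      field_simp
    · have hne : (i, a) ≠ (i', a') := fun hc => h2 (by
        rw [Prod.mk.injEq] at hc; rw [sub_eq_zero]; exact hc.1)
      rw [if_pos h1, if_neg h2, if_neg hne]
      simp
  · have hne : (i, a) ≠ (i', a') := fun hc => h1 (by
      rw [Prod.mk.injEq] at hc; rw [sub_eq_zero]; exact hc.2)
    rw [if_neg h1, if_neg hne]
    simp

/-- Index equivalence. -/
def eqv (q : ℕ) [NeZero q] : (Fin q × Fin q) ≃ (ZMod q × ZMod q) :=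
  (fz q).prodCongr (fz q)

lemma arrayB_apply' (l : ℕ) (z w : ZMod q) (j : Fin l) (b : Fin q) :
    arrayB q l ((fz q).symm z, (fz q).symm w) (j, b)
      = if fz q b = w - z * ((j : ℕ) : ZMod q) then 1 else 0 := by
  show (cyclicShift q ^ (((fz q).symm z : ℕ) * (j : ℕ))) ((fz q).symm w) b = _
  rw [cyclicShift_pow_apply]
  congr 1
  rw [Nat.cast_mul]
  rw [show ((((fz q).symm w : ℕ) : ZMod q)) = fz q ((fz q).symm w) from rfl,
    show ((((fz q).symm z : ℕ) : ZMod q)) = fz q ((fz q).symm z) from rfl,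
    (fz q).apply_symm_apply, (fz q).apply_symm_apply]
  rfl

lemma A_apply (l : ℕ) (i a i' a' : ZMod q) :
    (arrayB q l * (arrayB q l)ᵀ) ((fz q).symm i, (fz q).symm a) ((fz q).symm i', (fz q).symm a')
      = ∑ j : Fin l, (if a - i * ((j : ℕ) : ZMod q) = a' - i' * ((j : ℕ) : ZMod q)
          then (1 : ℝ) else 0) := by
  rw [Matrix.mul_apply, Fintype.sum_prod_type]
  have h1 : ∀ (j : Fin l) (b : Fin q),
      arrayB q l ((fz q).symm i, (fz q).symm a) (j, b)
        * (arrayB q l)ᵀ (j, b) ((fz q).symm i', (fz q).symm a')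
      = (if fz q b = a - i * ((j : ℕ) : ZMod q) then (1:ℝ) else 0)
        * (if fz q b = a' - i' * ((j : ℕ) : ZMod q) then (1:ℝ) else 0) := by
    intro j b
    rw [Matrix.transpose_apply, arrayB_apply', arrayB_apply']
  simp only [h1]
  refine Finset.sum_congr rfl (fun j _ => ?_)
  rw [Equiv.sum_comp (fz q)
    (fun z => (if z = a - i * ((j : ℕ) : ZMod q) then (1:ℝ) else 0)
      * (if z = a' - i' * ((j : ℕ) : ZMod q) then (1:ℝ) else 0))]
  simp only [ite_mul, one_mul, zero_mul]
  rw [Finset.sum_ite_eq' Finset.univ]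
  simp

/-- The base-changed, reindexed matrix `B Bᵀ`. -/
noncomputable def Amat (q l : ℕ) [NeZero q] : Matrix (ZMod q × ZMod q) (ZMod q × ZMod q) ℂ :=
  Matrix.reindex (eqv q) (eqv q) ((arrayB q l * (arrayB q l)ᵀ).map Complex.ofRealHom)

lemma Amat_apply (l : ℕ) (i a i' a' : ZMod q) :
    Amat q l (i, a) (i', a')
      = ∑ j : Fin l, (if a - i * ((j : ℕ) : ZMod q) = a' - i' * ((j : ℕ) : ZMod q)
          then (1 : ℂ) else 0) := by
  rw [Amat, Matrix.reindex_apply, Matrix.submatrix_apply, Matrix.map_apply]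
  rw [show (eqv q).symm (i, a) = ((fz q).symm i, (fz q).symm a) from rfl,
    show (eqv q).symm (i', a') = ((fz q).symm i', (fz q).symm a') from rfl]
  rw [A_apply, map_sum]
  refine Finset.sum_congr rfl (fun j _ => ?_)
  simp [apply_ite Complex.ofRealHom]

variable [Fact (Nat.Prime q)]

lemma main_eq (l : ℕ) (hq : 1 < q) :
    Amat q l * Umat hω = Umat hω * Matrix.diagonal (fun r => ((lam q l r : ℝ) : ℂ)) := by
  ext ⟨i, a⟩ ⟨s, u⟩
  rw [Matrix.mul_diagonal, Matrix.mul_apply, Fintype.sum_prod_type]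
  have step0 : ∀ (i' a' : ZMod q), Amat q l (i, a) (i', a') * Umat hω (i', a') (s, u)
      = ∑ j : Fin l, (if a' = a - i * ((j : ℕ) : ZMod q) + i' * ((j : ℕ) : ZMod q)
          then (1 : ℂ) else 0) * psi hω (s * a' + u * i') := by
    intro i' a'
    rw [Amat_apply, Finset.sum_mul]
    refine Finset.sum_congr rfl (fun j _ => ?_)
    congr 2
    rw [eq_iff_iff]
    constructor
    · intro h; linear_combination -h
    · intro h; linear_combination -h
  simp only [step0]
  -- swap sums so that j is outermost
  have swap1 : (∑ i' : ZMod q, ∑ a' : ZMod q, ∑ j : Fin l,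
      (if a' = a - i * ((j : ℕ) : ZMod q) + i' * ((j : ℕ) : ZMod q) then (1:ℂ) else 0)
        * psi hω (s * a' + u * i'))
      = ∑ j : Fin l, ∑ i' : ZMod q, ∑ a' : ZMod q,
      (if a' = a - i * ((j : ℕ) : ZMod q) + i' * ((j : ℕ) : ZMod q) then (1:ℂ) else 0)
        * psi hω (s * a' + u * i') := by
    rw [show (∑ i' : ZMod q, ∑ a' : ZMod q, ∑ j : Fin l,
      (if a' = a - i * ((j : ℕ) : ZMod q) + i' * ((j : ℕ) : ZMod q) then (1:ℂ) else 0)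
        * psi hω (s * a' + u * i'))
      = ∑ i' : ZMod q, ∑ j : Fin l, ∑ a' : ZMod q,
      (if a' = a - i * ((j : ℕ) : ZMod q) + i' * ((j : ℕ) : ZMod q) then (1:ℂ) else 0)
        * psi hω (s * a' + u * i')
      from Finset.sum_congr rfl fun i' _ => Finset.sum_comm]
    exact Finset.sum_comm
  rw [swap1]
  have step1 : ∀ j : Fin l, ∑ i' : ZMod q, ∑ a' : ZMod q,
      (if a' = a - i * ((j : ℕ) : ZMod q) + i' * ((j : ℕ) : ZMod q) then (1:ℂ) else 0)
        * psi hω (s * a' + u * i')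
      = psi hω (s * (a - i * ((j : ℕ) : ZMod q)))
          * (if s * ((j : ℕ) : ZMod q) + u = 0 then (q : ℂ) else 0) := by
    intro j
    have inner : ∀ i' : ZMod q, ∑ a' : ZMod q,
        (if a' = a - i * ((j : ℕ) : ZMod q) + i' * ((j : ℕ) : ZMod q) then (1:ℂ) else 0)
          * psi hω (s * a' + u * i')
        = psi hω (s * (a - i * ((j : ℕ) : ZMod q)))
            * psi hω ((s * ((j : ℕ) : ZMod q) + u) * i') := by
      intro i'
      simp only [ite_mul, one_mul, zero_mul]
      rw [Finset.sum_ite_eq' Finset.univ]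
      rw [if_pos (Finset.mem_univ _), ← AddChar.map_add_eq_mul]
      congr 1
      ring
    simp only [inner]
    rw [← Finset.mul_sum, sum_psi hω]
  simp only [step1]
  by_cases hs : s = 0
  · subst hs
    have e1 : ∀ j : Fin l, psi hω (0 * (a - i * ((j:ℕ):ZMod q)))
        * (if (0:ZMod q) * ((j:ℕ):ZMod q) + u = 0 then (q:ℂ) else 0)
        = (if u = 0 then (q:ℂ) else 0) := by
      intro j
      rw [zero_mul, AddChar.map_zero_eq_one, one_mul, zero_mul, zero_add]
    simp only [e1, Finset.sum_const, Finset.card_univ, Fintype.card_fin]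
    by_cases hu : u = 0
    · subst hu
      simp only [lam, if_pos rfl, Umat, Matrix.of_apply, zero_mul, add_zero,
        AddChar.map_zero_eq_one, one_mul, mul_one]
      push_cast
      rw [nsmul_eq_mul]
      push_cast
      ring
    · simp [lam, hu, Umat]
  · set t0 : ZMod q := (-u) * s⁻¹ with ht0
    have hst0 : s * t0 = -u := by
      rw [ht0]
      field_simp
    have hcond : ∀ z : ZMod q, (s * z + u = 0) ↔ z = t0 := by
      intro z
      constructor
      · intro h
        have h2 : s * z = s * t0 := by rw [hst0]; linear_combination h
        exact mul_left_cancel₀ hs h2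
      · intro h; rw [h, hst0]; ring
    have e1 : ∀ j : Fin l, psi hω (s * (a - i * ((j:ℕ):ZMod q)))
        * (if s * ((j:ℕ):ZMod q) + u = 0 then (q:ℂ) else 0)
        = (if ((j:ℕ):ZMod q) = t0 then psi hω (s*a + u*i) * q else 0) := by
      intro j
      by_cases hj : ((j:ℕ):ZMod q) = t0
      · rw [if_pos ((hcond _).mpr hj), if_pos hj, hj]
        rw [show s * (a - i * t0) = s*a + u*i from by linear_combination -i * hst0]
      · rw [if_neg (fun h => hj ((hcond _).mp h)), if_neg hj, mul_zero]
    simp only [e1]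
    rw [← Finset.sum_filter, Finset.sum_const]
    have hcard : (Finset.univ.filter fun j : Fin l => ((j:ℕ):ZMod q) = t0).card
        = l / q + if t0.val < l % q then 1 else 0 := by
      have hiff : ∀ n : ℕ, ((n : ZMod q) = t0) ↔ n % q = t0.val := by
        intro n
        constructor
        · intro h; rw [← h, ZMod.val_natCast]
        · intro h
          have h2 : ((t0.val : ℕ) : ZMod q) = t0 := ZMod.natCast_rightInverse t0
          rw [← h2, ← h, ZMod.natCast_mod]
      have hcc : (Finset.univ.filter fun j : Fin l => ((j:ℕ):ZMod q) = t0).card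
          = ((Finset.range l).filter fun n => n % q = t0.val).card := by
        rw [Finset.card_filter, Finset.card_filter,
          ← Fin.sum_univ_eq_sum_range (fun n => if n % q = t0.val then 1 else 0) l]
        exact Finset.sum_congr rfl fun j _ => by simp only [hiff]
      rw [hcc, count_mod q hq t0.val t0.val_lt l]
    rw [hcard]
    simp only [lam, if_neg hs, Umat, Matrix.of_apply]
    rw [nsmul_eq_mul]
    push_cast
    split_ifs <;> push_cast <;> ring

include hω in
lemma charpoly_Amat (l : ℕ) (hq : 1 < q) :
    (Amat q l).charpoly = ∏ r : ZMod q × ZMod q, (X - C ((lam q l r : ℝ) : ℂ)) := by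
  set D : Matrix (ZMod q × ZMod q) (ZMod q × ZMod q) ℂ :=
    Matrix.diagonal (fun r => ((lam q l r : ℝ) : ℂ)) with hD
  have hUV := Umat_mul_Vmat hω hq
  have hA : Amat q l = Umat hω * D * Vmat hω := by
    calc Amat q l = Amat q l * (Umat hω * Vmat hω) := by rw [hUV, mul_one]
    _ = (Amat q l * Umat hω) * Vmat hω := by rw [mul_assoc]
    _ = _ := by rw [main_eq hω l hq]
  have hmapUV : (Umat hω).map (C : ℂ →+* ℂ[X]) * (Vmat hω).map (C : ℂ →+* ℂ[X]) = 1 := by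
    rw [← Matrix.map_mul, hUV, Matrix.map_one _ (map_zero C) (map_one C)]
  have key : charmatrix (Amat q l)
      = (Umat hω).map (C : ℂ →+* ℂ[X]) * charmatrix D * (Vmat hω).map (C : ℂ →+* ℂ[X]) := by
    rw [hA]
    show Matrix.scalar _ (X : ℂ[X]) - (C : ℂ →+* ℂ[X]).mapMatrix _ = _
    rw [show charmatrix D = Matrix.scalar _ (X : ℂ[X]) - (C : ℂ →+* ℂ[X]).mapMatrix D from rfl]
    rw [Matrix.mul_sub, Matrix.sub_mul]
    congr 1
    · have hcomm : (Umat hω).map (C : ℂ →+* ℂ[X]) * Matrix.scalar _ (X : ℂ[X])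
          = Matrix.scalar _ (X : ℂ[X]) * (Umat hω).map (C : ℂ →+* ℂ[X]) :=
        ((Matrix.scalar_commute (X : ℂ[X]) (Commute.all X) _)).symm
      rw [hcomm, mul_assoc, hmapUV, mul_one]
    · simp only [RingHom.mapMatrix_apply]
      rw [← Matrix.map_mul, ← Matrix.map_mul]
  rw [Matrix.charpoly, key, Matrix.det_mul, Matrix.det_mul]
  rw [show ((Umat hω).map (C : ℂ →+* ℂ[X])).det * (charmatrix D).det
      * ((Vmat hω).map (C : ℂ →+* ℂ[X])).det
    = (charmatrix D).det * (((Umat hω).map (C : ℂ →+* ℂ[X])).det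
      * ((Vmat hω).map (C : ℂ →+* ℂ[X])).det) from by ring]
  rw [← Matrix.det_mul, hmapUV, Matrix.det_one, mul_one]
  rw [← Matrix.charpoly, hD, ArrayBAux3.charpoly_diagonal]

lemma prod_lam (l : ℕ) (hq1 : 1 < q) :
    ∏ r : ZMod q × ZMod q, (X - C (lam q l r)) =
      (X - C ((q : ℝ) * l)) *
        ((X - C ((l : ℝ) + (q : ℝ) - (l % q : ℕ))) ^ (l % q) *
          (X - C ((l : ℝ) - (l % q : ℕ))) ^ (q - l % q)) ^ (q - 1) *
        X ^ (q - 1) := by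
  have hk_lt : l % q < q := Nat.mod_lt _ (by omega)
  have hdm : q * (l / q) + l % q = l := Nat.div_add_mod l q
  have hdmR : (q : ℝ) * ((l / q : ℕ) : ℝ) + ((l % q : ℕ) : ℝ) = (l : ℝ) := by
    exact_mod_cast congrArg (Nat.cast : ℕ → ℝ) hdm
  have e1 : ((q * (l / q + 1) : ℕ) : ℝ) = (l : ℝ) + (q : ℝ) - ((l % q : ℕ) : ℝ) := by
    push_cast
    linarith
  have e2 : ((q * (l / q) : ℕ) : ℝ) = (l : ℝ) - ((l % q : ℕ) : ℝ) := by
    push_cast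
    linarith
  rw [Fintype.prod_prod_type]
  rw [← Finset.mul_prod_erase Finset.univ _ (Finset.mem_univ (0 : ZMod q))]
  have h0 : ∏ u : ZMod q, (X - C (lam q l (0, u))) = (X - C ((q:ℝ) * l)) * X ^ (q - 1) := by
    rw [← Finset.mul_prod_erase Finset.univ _ (Finset.mem_univ (0 : ZMod q))]
    have hz : ∀ u ∈ Finset.univ.erase (0 : ZMod q), X - C (lam q l (0, u)) = X := by
      intro u hu
      have hune := Finset.ne_of_mem_erase hu
      simp [lam, hune]
    rw [Finset.prod_congr rfl hz, Finset.prod_const,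
      Finset.card_erase_of_mem (Finset.mem_univ _), Finset.card_univ, ZMod.card]
    congr 2
    simp only [lam, if_pos rfl]
    push_cast
    ring
  have hsprod : ∀ s ∈ Finset.univ.erase (0 : ZMod q),
      ∏ u : ZMod q, (X - C (lam q l (s, u)))
        = (X - C ((l : ℝ) + (q : ℝ) - ((l % q : ℕ) : ℝ))) ^ (l % q) *
          (X - C ((l : ℝ) - ((l % q : ℕ) : ℝ))) ^ (q - l % q) := by
    intro s hs0
    have hsne : s ≠ 0 := Finset.ne_of_mem_erase hs0
    have hre : ∏ u : ZMod q, (X - C (lam q l (s, u)))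
        = ∏ t : ZMod q, (X - C (lam q l (s, -(s * t)))) := by
      exact (Equiv.prod_comp ((Equiv.mulLeft₀ s hsne).trans (Equiv.neg _))
        (fun u => X - C (lam q l (s, u)))).symm
    rw [hre]
    have hval : ∀ t : ZMod q, lam q l (s, -(s * t))
        = if t.val < l % q then ((q * (l / q + 1) : ℕ) : ℝ) else ((q * (l / q) : ℕ) : ℝ) := by
      intro t
      have ht0 : -(-(s * t)) * s⁻¹ = t := by
        field_simp
      simp only [lam, if_neg hsne, ht0]
      split_ifs <;> norm_num
    rw [Finset.prod_congr rfl (fun t _ => by rw [hval t])]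
    simp only [apply_ite (fun x : ℝ => X - C x)]
    rw [Finset.prod_ite, Finset.prod_const, Finset.prod_const]
    rw [card_val_lt (l % q) (le_of_lt hk_lt)]
    have hcardnot : (Finset.univ.filter fun t : ZMod q => ¬ t.val < l % q).card = q - l % q := by
      have hadd := Finset.card_filter_add_card_filter_not
        (s := (Finset.univ : Finset (ZMod q))) (p := fun t : ZMod q => t.val < l % q)
      rw [Finset.card_univ, ZMod.card] at hadd
      rw [card_val_lt (l % q) (le_of_lt hk_lt)] at hadd
      omega
    rw [hcardnot, e1, e2]
  rw [Finset.prod_congr rfl hsprod, Finset.prod_const,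
    Finset.card_erase_of_mem (Finset.mem_univ _), Finset.card_univ, ZMod.card, h0]
  ring

end ArrayBAux4

theorem arrayB_charpoly_of_not_dvd (q l : ℕ) (hq : q.Prime) (hql : q < l)
    (hk : l % q ≠ 0) :
    (arrayB q l * (arrayB q l)ᵀ).charpoly =
      (X - C ((q : ℝ) * l)) *
        (X - C ((l : ℝ) + (q : ℝ) - (l % q : ℕ))) ^ ((q - 1) * (l % q)) *
        (X - C ((l : ℝ) - (l % q : ℕ))) ^ ((q - 1) * (q - l % q)) *
        X ^ (q - 1) := by
  haveI : Fact q.Prime := ⟨hq⟩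
  haveI : NeZero q := ⟨hq.pos.ne'⟩
  have hq1 : 1 < q := hq.one_lt
  have hω := Complex.isPrimitiveRoot_exp q (by omega)
  have hmain : ((arrayB q l * (arrayB q l)ᵀ).charpoly).map Complex.ofRealHom
      = ((∏ r : ZMod q × ZMod q, (X - C (ArrayBAux4.lam q l r))).map Complex.ofRealHom) := by
    rw [← Matrix.charpoly_map]
    have h1 : ((arrayB q l * (arrayB q l)ᵀ).map Complex.ofRealHom).charpoly
        = (ArrayBAux4.Amat q l).charpoly :=
      (Matrix.charpoly_reindex (ArrayBAux4.eqv q) _).symm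
    rw [h1, ArrayBAux4.charpoly_Amat hω l hq1]
    rw [Polynomial.map_prod]
    refine Finset.prod_congr rfl fun r _ => ?_
    simp
  have h2 := Polynomial.map_injective Complex.ofRealHom Complex.ofReal_injective hmain
  rw [h2, ArrayBAux4.prod_lam l hq1]
  rw [mul_pow, ← pow_mul, ← pow_mul,
    Nat.mul_comm (l % q) (q - 1), Nat.mul_comm (q - l % q) (q - 1)]
  ring
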